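/- arXiv:1104.3299 — 2 statements merged into one kernel-verified Lean document; each statement's English description precedes it below -/
import Mathlib

section
/- Let (A, I, γ) be a divided power ring, p a prime, m a natural number, and x ∈ A with x^{p^m} ∈ I. For natural numbers k = k' + k'' with q = ⌊k/p^m⌋, q' = ⌊k'/p^m⌋, q'' = ⌊k''/p^m⌋, one has q'!·q''! · x^{⟨k'⟩}·x^{⟨k''⟩} = q! · x^{⟨k⟩}; equivalently, x^{⟨k'⟩}·x^{⟨k''⟩} = (q!/(q'! q''!)) · x^{⟨k⟩} whenever q!/(q'!q''!) makes sense in A. -/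
theorem stmt5 {A : Type*} [CommRing A] {I : Ideal A} (hI : DividedPowers I)
    (p m : ℕ) (hp : p.Prime) (x : A) (hx : x ^ p ^ m ∈ I) (k' k'' : ℕ) :
    ((k' / p ^ m).factorial : A) * ((k'' / p ^ m).factorial : A) *
        (x ^ (k' % p ^ m) * hI.dpow (k' / p ^ m) (x ^ p ^ m) *
          (x ^ (k'' % p ^ m) * hI.dpow (k'' / p ^ m) (x ^ p ^ m))) =
      (((k' + k'') / p ^ m).factorial : A) *
        (x ^ ((k' + k'') % p ^ m) * hI.dpow ((k' + k'') / p ^ m) (x ^ p ^ m)) := by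
  set P := p ^ m with hPdef
  have hP : 0 < P := pow_pos hp.pos m
  set q' := k' / P
  set q'' := k'' / P
  set r' := k' % P
  set r'' := k'' % P
  have hr' : r' < P := Nat.mod_lt _ hP
  have hr'' : r'' < P := Nat.mod_lt _ hP
  have hdiv : (k' + k'') / P = q' + q'' + if P ≤ r' + r'' then 1 else 0 :=
    Nat.add_div hP
  have hmod : (k' + k'') % P = (r' + r'') % P := Nat.add_mod k' k'' P
  have key : hI.dpow q' (x ^ P) * hI.dpow q'' (x ^ P)
      = ((q' + q'').choose q' : A) * hI.dpow (q' + q'') (x ^ P) := hI.mul_dpow (m := q') (n := q'') hx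
  by_cases h : P ≤ r' + r''
  · -- overflow case
    have hdiv' : (k' + k'') / P = q' + q'' + 1 := by rw [hdiv, if_pos h]
    have hmod' : (k' + k'') % P = r' + r'' - P := by
      rw [hmod, Nat.mod_eq_sub_mod h, Nat.mod_eq_of_lt (by omega)]
    have hxpow : x ^ r' * x ^ r'' = x ^ (r' + r'' - P) * x ^ P := by
      rw [← pow_add, ← pow_add]
      congr 1
      omega
    have key2 : x ^ P * hI.dpow (q' + q'') (x ^ P)
        = ((q' + q'' + 1 : ℕ) : A) * hI.dpow (q' + q'' + 1) (x ^ P) := by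
      have h1 : hI.dpow 1 (x ^ P) = x ^ P := hI.dpow_one hx
      have := hI.mul_dpow (m := 1) (n := q' + q'') hx
      rw [h1] at this
      rw [this]
      congr 2
      · rw [Nat.add_comm 1 (q' + q''), Nat.choose_one_right]
      · omega
    rw [hdiv', hmod']
    have h0 : q'.factorial * q''.factorial * (q' + q'').choose q' = (q' + q'').factorial := by
      rw [Nat.add_comm q' q'', ← Nat.add_choose_mul_factorial_mul_factorial q'' q']; ring
    have hfac : ((q' + q'' + 1).factorial : A)
        = (q'.factorial : A) * (q''.factorial : A) * ((q' + q'').choose q' : A)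
          * ((q' + q'' + 1 : ℕ) : A) := by
      rw [Nat.factorial_succ, ← h0]; push_cast; ring
    calc (q'.factorial : A) * (q''.factorial : A) *
          (x ^ r' * hI.dpow q' (x ^ P) * (x ^ r'' * hI.dpow q'' (x ^ P)))
        = (q'.factorial : A) * (q''.factorial : A) * (x ^ r' * x ^ r'')
            * (hI.dpow q' (x ^ P) * hI.dpow q'' (x ^ P)) := by ring
      _ = (q'.factorial : A) * (q''.factorial : A) * ((q' + q'').choose q' : A)
            * x ^ (r' + r'' - P) * (x ^ P * hI.dpow (q' + q'') (x ^ P)) := by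
            rw [key, hxpow]; ring
      _ = (q'.factorial : A) * (q''.factorial : A) * ((q' + q'').choose q' : A)
            * ((q' + q'' + 1 : ℕ) : A)
            * (x ^ (r' + r'' - P) * hI.dpow (q' + q'' + 1) (x ^ P)) := by
            rw [key2]; ring
      _ = ((q' + q'' + 1).factorial : A)
            * (x ^ (r' + r'' - P) * hI.dpow (q' + q'' + 1) (x ^ P)) := by
            rw [hfac]
  · -- no overflow
    have hdiv' : (k' + k'') / P = q' + q'' := by rw [hdiv, if_neg h]; ring
    have hmod' : (k' + k'') % P = r' + r'' := by
      rw [hmod, Nat.mod_eq_of_lt (by omega)]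
    rw [hdiv', hmod']
    have h0 : q'.factorial * q''.factorial * (q' + q'').choose q' = (q' + q'').factorial := by
      rw [Nat.add_comm q' q'', ← Nat.add_choose_mul_factorial_mul_factorial q'' q']; ring
    have hfac : ((q' + q'').factorial : A)
        = (q'.factorial : A) * (q''.factorial : A) * ((q' + q'').choose q' : A) := by
      rw [← h0]; push_cast; ring
    calc (q'.factorial : A) * (q''.factorial : A) *
          (x ^ r' * hI.dpow q' (x ^ P) * (x ^ r'' * hI.dpow q'' (x ^ P)))
        = (q'.factorial : A) * (q''.factorial : A) * (x ^ r' * x ^ r'')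
            * (hI.dpow q' (x ^ P) * hI.dpow q'' (x ^ P)) := by ring
      _ = (q'.factorial : A) * (q''.factorial : A) * ((q' + q'').choose q' : A)
            * (x ^ (r' + r'') * hI.dpow (q' + q'') (x ^ P)) := by
            rw [key, ← pow_add]; ring
      _ = ((q' + q'').factorial : A)
            * (x ^ (r' + r'') * hI.dpow (q' + q'') (x ^ P)) := by rw [hfac]
end

section
/- Let p be a prime, m a natural number, and A a commutative ring with a divided power ideal (I, γ) such that p·A = 0. For x, y ∈ A with x^{p^m}, y^{p^m}, (x+y)^{p^m} ∈ I and γ compatible on these elements (e.g. A an m-PD ring with x, y in the m-PD ideal), and for any natural number k, one has (x+y)^{⟨k⟩} = Σ_{k'=0}^{k} ⟨k choose k'⟩ · x^{⟨k'⟩} · y^{⟨k−k'⟩}, where ⟨k choose k'⟩ denotes the image in A of the p-adic integer C(k,k')·⌊k'/p^m⌋!·⌊(k−k')/p^m⌋!/⌊k/p^m⌋!. -/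
open Finset Nat

/-- `X` and `Y` have the same `p`-adic valuation and the same unit part mod `p`. -/
def SU (p X Y : ℕ) : Prop :=
  ∃ w₁ w₂ : ℕ, X * w₁ = Y * w₂ ∧ (w₁ : ZMod p) = (w₂ : ZMod p) ∧ (w₁ : ZMod p) ≠ 0

variable {p : ℕ}

lemma SU.refl (hp : p.Prime) (X : ℕ) : SU p X X := by
  haveI : Fact p.Prime := ⟨hp⟩
  exact ⟨1, 1, rfl, rfl, by simp⟩

lemma SU.symm {X Y : ℕ} (h : SU p X Y) : SU p Y X := by
  obtain ⟨w₁, w₂, h1, h2, h3⟩ := h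
  exact ⟨w₂, w₁, h1.symm, h2.symm, h2 ▸ h3⟩

lemma SU.mul (hp : p.Prime) {X Y X' Y' : ℕ} (h : SU p X Y) (h' : SU p X' Y') :
    SU p (X * X') (Y * Y') := by
  haveI : Fact p.Prime := ⟨hp⟩
  obtain ⟨w₁, w₂, h1, h2, h3⟩ := h
  obtain ⟨v₁, v₂, g1, g2, g3⟩ := h'
  refine ⟨w₁ * v₁, w₂ * v₂, ?_, ?_, ?_⟩
  · calc X * X' * (w₁ * v₁) = (X * w₁) * (X' * v₁) := by ring
    _ = (Y * w₂) * (Y' * v₂) := by rw [h1, g1]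
    _ = Y * Y' * (w₂ * v₂) := by ring
  · push_cast; rw [h2, g2]
  · push_cast; exact mul_ne_zero h3 g3

lemma SU.trans (hp : p.Prime) {X Y Z : ℕ} (h : SU p X Y) (h' : SU p Y Z) : SU p X Z := by
  haveI : Fact p.Prime := ⟨hp⟩
  obtain ⟨w₁, w₂, h1, h2, h3⟩ := h
  obtain ⟨v₁, v₂, g1, g2, g3⟩ := h'
  refine ⟨w₁ * v₁, w₂ * v₂, ?_, ?_, ?_⟩
  · calc X * (w₁ * v₁) = (X * w₁) * v₁ := by ring
    _ = (Y * v₁) * w₂ := by rw [h1]; ring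
    _ = (Z * v₂) * w₂ := by rw [g1]
    _ = Z * (w₂ * v₂) := by ring
  · push_cast; rw [h2, g2]
  · push_cast; exact mul_ne_zero h3 g3

lemma SU.of_eq (hp : p.Prime) {X Y : ℕ} (h : X = Y) : SU p X Y := h ▸ SU.refl hp X

lemma SU.cancel {X Y c : ℕ} (hc : c ≠ 0) (h : SU p (X * c) (Y * c)) : SU p X Y := by
  obtain ⟨w₁, w₂, h1, h2, h3⟩ := h
  refine ⟨w₁, w₂, ?_, h2, h3⟩
  have : (X * w₁) * c = (Y * w₂) * c := by
    calc (X * w₁) * c = X * c * w₁ := by ring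
    _ = Y * c * w₂ := h1
    _ = (Y * w₂) * c := by ring
  exact Nat.eq_of_mul_eq_mul_right (Nat.pos_of_ne_zero hc) this

/-- extraction: equal valuations and equal unit parts mod p -/
lemma SU.extract (hp : p.Prime) {X Y : ℕ} (h : SU p X Y) (hY : Y ≠ 0) :
    X ≠ 0 ∧ X.factorization p = Y.factorization p ∧
      ((X / p ^ X.factorization p : ℕ) : ZMod p) = ((Y / p ^ Y.factorization p : ℕ) : ZMod p) := by
  haveI : Fact p.Prime := ⟨hp⟩
  obtain ⟨w₁, w₂, h1, h2, h3⟩ := h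
  have hw₁ : ¬ p ∣ w₁ := fun hd => h3 ((ZMod.natCast_eq_zero_iff w₁ p).mpr hd)
  have hw₂ : ¬ p ∣ w₂ := fun hd => (h2 ▸ h3) ((ZMod.natCast_eq_zero_iff w₂ p).mpr hd)
  have hw₁0 : w₁ ≠ 0 := fun h0 => hw₁ (h0 ▸ dvd_zero p)
  have hw₂0 : w₂ ≠ 0 := fun h0 => hw₂ (h0 ▸ dvd_zero p)
  have hX : X ≠ 0 := by
    intro h0
    exact (mul_ne_zero hY hw₂0) (by rw [← h1, h0, zero_mul])
  have hfw₁ : w₁.factorization p = 0 := Nat.factorization_eq_zero_of_not_dvd hw₁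
  have hfw₂ : w₂.factorization p = 0 := Nat.factorization_eq_zero_of_not_dvd hw₂
  have hfac : X.factorization p = Y.factorization p := by
    have := congrArg (fun n => n.factorization p) h1
    simpa [Nat.factorization_mul hX hw₁0, Nat.factorization_mul hY hw₂0, hfw₁, hfw₂] using this
  refine ⟨hX, hfac, ?_⟩
  have hoc : X / p ^ X.factorization p * w₁ = Y / p ^ Y.factorization p * w₂ := by
    have e1 := Nat.ordCompl_mul X w₁ p
    have e2 := Nat.ordCompl_mul Y w₂ p
    rw [h1] at e1
    rw [hfw₁, pow_zero, Nat.div_one] at e1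
    rw [hfw₂, pow_zero, Nat.div_one] at e2
    rw [← e1, e2]
  have := congrArg (fun n : ℕ => (n : ZMod p)) hoc
  push_cast at this
  rw [h2] at this
  exact mul_right_cancel₀ (h2 ▸ h3) this

/-- A single factor `q*d + c` with `0 < c < q = p^m` has the same p-adic unit as `c`. -/
lemma SU_factor (hp : p.Prime) {m c : ℕ} (hc0 : 0 < c) (hcq : c < p ^ m) (d : ℕ) :
    SU p (p ^ m * d + c) c := by
  haveI : Fact p.Prime := ⟨hp⟩
  set v := c.factorization p with hv
  have hpv : p ^ v ∣ c := Nat.ordProj_dvd c p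
  have hvm : v < m := by
    have h1 : p ^ v ≤ c := Nat.le_of_dvd hc0 hpv
    have := lt_of_le_of_lt h1 hcq
    exact (Nat.pow_lt_pow_iff_right hp.one_lt).mp this
  set c' := c / p ^ v with hc'
  have hcc : c = p ^ v * c' := (Nat.mul_div_cancel' hpv).symm
  set e := p ^ (m - v) * d + c' with he
  refine ⟨c', e, ?_, ?_, ?_⟩
  · calc (p ^ m * d + c) * c' = (p ^ v * (p ^ (m - v) * d) + p ^ v * c') * c' := by
          rw [← mul_assoc, ← pow_add, Nat.add_sub_cancel' hvm.le, ← hcc]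
    _ = c * e := by rw [hcc]; ring
  · rw [he]
    push_cast
    rw [ZMod.natCast_self, zero_pow (Nat.sub_ne_zero_of_lt hvm), zero_mul, zero_add]
  · intro h0
    exact Nat.not_dvd_ordCompl hp hc0.ne' ((ZMod.natCast_eq_zero_iff c' p).mp h0)

/-- Berthelot's factorial decomposition up to p-adic units:
`(q*n₁+n₀)! ~ n₁! * n₀! * (q!)^n₁` for `n₀ < q = p^m`. -/
lemma SU_factorial (hp : p.Prime) (m : ℕ) :
    ∀ n₁ n₀, n₀ < p ^ m →
      SU p ((p ^ m * n₁ + n₀).factorial)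
        (n₁.factorial * n₀.factorial * (p ^ m).factorial ^ n₁) := by
  intro n₁
  induction n₁ with
  | zero =>
    intro n₀ _
    exact SU.of_eq hp (by simp)
  | succ n₁ ih =>
    have key0 : SU p ((p ^ m * (n₁ + 1)).factorial)
        ((n₁ + 1).factorial * Nat.factorial 0 * (p ^ m).factorial ^ (n₁ + 1)) := by
      have hq1 : 1 ≤ p ^ m := Nat.one_le_pow _ _ hp.pos
      have hstep : (p ^ m * (n₁ + 1)) = (p ^ m * n₁ + (p ^ m - 1)) + 1 := by rw [Nat.mul_succ]; omega
      have hfact : (p ^ m * (n₁ + 1)).factorial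
          = (p ^ m * n₁ + (p ^ m - 1)).factorial * (p ^ m * (n₁ + 1)) := by
        rw [hstep, Nat.factorial_succ, mul_comm, ← hstep]
      rcases Nat.eq_or_lt_of_le hq1 with hq | hq
      · -- q = 1 : degenerate
        have hq' : p ^ m = 1 := hq.symm
        apply SU.of_eq hp
        simp [hq', Nat.factorial]
      · have hsub : p ^ m - 1 < p ^ m := by omega
        have h1 := ih (p ^ m - 1) hsub
        have h2 : SU p (p ^ m * (n₁ + 1)) (p ^ m * (n₁ + 1)) := SU.refl hp _
        have h3 := SU.mul hp h1 h2
        rw [← hfact] at h3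
        apply h3.trans hp
        apply SU.of_eq hp
        have : (p ^ m - 1).factorial * (p ^ m) = (p ^ m).factorial := by
          rw [mul_comm, ← Nat.succ_pred_eq_of_pos (by omega : 0 < p ^ m)]
          rw [Nat.factorial_succ]
          simp
        calc n₁.factorial * (p ^ m - 1).factorial * (p ^ m).factorial ^ n₁ * (p ^ m * (n₁ + 1))
            = ((n₁ + 1) * n₁.factorial) * Nat.factorial 0 *
              (((p ^ m - 1).factorial * p ^ m) * (p ^ m).factorial ^ n₁) := by
              simp [Nat.factorial]; ring
          _ = (n₁ + 1).factorial * Nat.factorial 0 * (p ^ m).factorial ^ (n₁ + 1) := by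
              rw [this, Nat.factorial_succ, pow_succ]; ring
    -- inner induction on n₀
    intro n₀
    induction n₀ with
    | zero => intro _; exact key0
    | succ n₀ ih0 =>
      intro hn₀
      have hn₀' : n₀ < p ^ m := by omega
      have h1 := ih0 hn₀'
      have h2 : SU p (p ^ m * (n₁ + 1) + n₀ + 1) (n₀ + 1) :=
        SU_factor hp (Nat.succ_pos n₀) hn₀ (n₁ + 1)
      have h3 := SU.mul hp h1 h2
      have hfact : (p ^ m * (n₁ + 1) + (n₀ + 1)).factorial
          = (p ^ m * (n₁ + 1) + n₀).factorial * (p ^ m * (n₁ + 1) + n₀ + 1) := by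
        rw [show p ^ m * (n₁ + 1) + (n₀ + 1) = (p ^ m * (n₁ + 1) + n₀) + 1 by ring,
          Nat.factorial_succ, mul_comm]
      rw [← hfact] at h3
      apply h3.trans hp
      apply SU.of_eq hp
      rw [Nat.factorial_succ n₀]
      ring

lemma strict_legendre {p : ℕ} (hp : p.Prime) {m s t r : ℕ} (hm : 1 ≤ m)
    (hs : s < p ^ m) (ht : t < p ^ m) (hr : r < p ^ m) (hst : s + t = p ^ m + r) :
    (s.factorial).factorization p + (t.factorial).factorization p <
      (r.factorial).factorization p + ((p ^ m).factorial).factorization p := by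
  haveI : Fact p.Prime := ⟨hp⟩
  have hlog : ∀ n : ℕ, n ≤ p ^ m → Nat.log p n < m + 1 := by
    intro n hn
    calc Nat.log p n ≤ Nat.log p (p ^ m) := Nat.log_mono_right hn
    _ = m := Nat.log_pow hp.one_lt m
    _ < m + 1 := Nat.lt_succ_self m
  rw [Nat.factorization_def _ hp, Nat.factorization_def _ hp,
    Nat.factorization_def _ hp, Nat.factorization_def _ hp,
    padicValNat_factorial (hlog s hs.le), padicValNat_factorial (hlog t ht.le),
    padicValNat_factorial (hlog r hr.le), padicValNat_factorial (hlog (p ^ m) le_rfl),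
    ← Finset.sum_add_distrib, ← Finset.sum_add_distrib]
  apply Finset.sum_lt_sum
  · intro i hi
    simp only [Finset.mem_Ico] at hi
    calc s / p ^ i + t / p ^ i ≤ (s + t) / p ^ i := Nat.add_div_le_add_div s t (p ^ i)
    _ = (p ^ i * p ^ (m - i) + r) / p ^ i := by rw [hst, ← pow_add, Nat.add_sub_cancel' (by omega)]
    _ = p ^ (m - i) + r / p ^ i := by
        rw [Nat.mul_add_div (pow_pos hp.pos i)]
    _ = r / p ^ i + p ^ m / p ^ i := by
        rw [Nat.pow_div (by omega) hp.pos, add_comm]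
  · refine ⟨m, Finset.mem_Ico.mpr ⟨hm, Nat.lt_succ_self m⟩, ?_⟩
    rw [Nat.div_eq_of_lt hs, Nat.div_eq_of_lt ht, Nat.div_self (pow_pos hp.pos m)]
    exact Nat.succ_pos _

lemma key_coeff {p : ℕ} (hp : p.Prime) (m k k' : ℕ) (hk' : k' ≤ k) :
    (((k.choose k' * (k' / p ^ m).factorial * ((k - k') / p ^ m).factorial)
        / p ^ ((k / p ^ m).factorial.factorization p) : ℕ) : ZMod p) =
      (if k' % p ^ m ≤ k % p ^ m then (((k % p ^ m).choose (k' % p ^ m) : ℕ) : ZMod p) else 0) *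
        (((k / p ^ m).factorial / p ^ ((k / p ^ m).factorial.factorization p) : ℕ) : ZMod p) := by
  haveI : Fact p.Prime := ⟨hp⟩
  set q := p ^ m with hq
  have hq0 : 0 < q := pow_pos hp.pos m
  set Q := k / q with hQdef
  set r := k % q with hrdef
  set a := k' / q with hadef
  set s := k' % q with hsdef
  set b := (k - k') / q with hbdef
  set t := (k - k') % q with htdef
  set v := Q.factorial.factorization p with hv
  set N := k.choose k' * a.factorial * b.factorial with hN
  have hrq : r < q := Nat.mod_lt _ hq0
  have hsq : s < q := Nat.mod_lt _ hq0
  have htq : t < q := Nat.mod_lt _ hq0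
  have hkQ : k = q * Q + r := by rw [hQdef, hrdef, Nat.div_add_mod]
  have hk'a : k' = q * a + s := by rw [hadef, hsdef, Nat.div_add_mod]
  have haQ : a ≤ Q := Nat.div_le_div_right hk'
  have SU1 : SU p k.factorial (Q.factorial * r.factorial * q.factorial ^ Q) := by
    have h := SU_factorial hp m Q r hrq
    rw [← hq, ← hkQ] at h
    exact h
  have SU2 : SU p k'.factorial (a.factorial * s.factorial * q.factorial ^ a) := by
    have h := SU_factorial hp m a s hsq
    rw [← hq, ← hk'a] at h
    exact h
  have SU3 : SU p (k - k').factorial (b.factorial * t.factorial * q.factorial ^ b) := by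
    have h := SU_factorial hp m b t htq
    rw [← hq] at h
    have hbt : q * b + t = k - k' := by rw [hbdef, htdef, Nat.div_add_mod]
    rw [hbt] at h
    exact h
  have hCh : k.choose k' * k'.factorial * (k - k').factorial = k.factorial :=
    Nat.choose_mul_factorial_mul_factorial hk'
  have SU5 : SU p (Q.factorial * r.factorial * q.factorial ^ Q)
      (k.choose k' * (a.factorial * s.factorial * q.factorial ^ a) *
        (b.factorial * t.factorial * q.factorial ^ b)) := by
    apply SU1.symm.trans hp
    rw [← hCh]
    exact ((SU.refl hp (k.choose k')).mul hp SU2).mul hp SU3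
  by_cases hsr : s ≤ r
  · -- no carry case
    have hmul : q * a ≤ q * Q := Nat.mul_le_mul_left q haQ
    have h2 : q * (Q - a) + q * a = q * Q := by
      rw [← Nat.mul_add, Nat.sub_add_cancel haQ]
    have hsub : k - k' = q * (Q - a) + (r - s) := by omega
    have hb : b = Q - a := by
      rw [hbdef, hsub, Nat.mul_add_div hq0, Nat.div_eq_of_lt (by omega), add_zero]
    have ht' : t = r - s := by
      rw [htdef, hsub, Nat.mul_add_mod, Nat.mod_eq_of_lt (by omega)]
    have habQ : a + b = Q := by omega
    have SU6 : SU p (N * (s.factorial * t.factorial)) (Q.factorial * r.factorial) := by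
      apply SU.cancel (pow_ne_zero Q (Nat.factorial_ne_zero q))
      refine (SU.of_eq hp ?_).trans hp (SU5.symm.trans hp (SU.of_eq hp ?_))
      · rw [hN, ← habQ, pow_add]; ring
      · ring
    have hr' : r.factorial = r.choose s * (s.factorial * t.factorial) := by
      rw [ht', ← Nat.choose_mul_factorial_mul_factorial hsr]; ring
    have SU7 : SU p N (Q.factorial * r.choose s) := by
      apply SU.cancel (mul_ne_zero (Nat.factorial_ne_zero s) (Nat.factorial_ne_zero t))
      apply SU6.trans hp (SU.of_eq hp ?_)
      rw [hr']; ring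
    have hCr0 : r.choose s ≠ 0 := (Nat.choose_pos hsr).ne'
    have hQCr0 : Q.factorial * r.choose s ≠ 0 := mul_ne_zero (Nat.factorial_ne_zero Q) hCr0
    obtain ⟨hN0, hfac, hunit⟩ := SU7.extract hp hQCr0
    have hfmul : (Q.factorial * r.choose s).factorization p = v + (r.choose s).factorization p := by
      have := congrArg (fun f => f p) (Nat.factorization_mul (Nat.factorial_ne_zero Q) hCr0)
      simpa using this
    rw [if_pos hsr]
    by_cases hdvd : p ∣ r.choose s
    · have h1 : v + 1 ≤ N.factorization p := by
        rw [hfac, hfmul]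
        have := hp.factorization_pos_of_dvd hCr0 hdvd
        omega
      obtain ⟨M, hM⟩ := (hp.pow_dvd_iff_le_factorization hN0).mpr h1
      have hdiv : N / p ^ v = p * M := by
        rw [hM, pow_succ, mul_assoc, Nat.mul_div_cancel_left _ (pow_pos hp.pos v)]
      have hCrz : ((r.choose s : ℕ) : ZMod p) = 0 := (ZMod.natCast_eq_zero_iff _ p).mpr hdvd
      rw [hdiv, hCrz]
      push_cast
      rw [ZMod.natCast_self]
      ring
    · have hCrf : (r.choose s).factorization p = 0 := Nat.factorization_eq_zero_of_not_dvd hdvd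
      have hNf : N.factorization p = v := by rw [hfac, hfmul, hCrf, add_zero]
      rw [hNf] at hunit
      rw [hfmul, hCrf, add_zero] at hunit
      have hdivmul : Q.factorial * r.choose s / p ^ v = Q.factorial / p ^ v * r.choose s := by
        rw [mul_comm, Nat.mul_div_assoc _ (Nat.ordProj_dvd _ _), mul_comm]
      rw [hdivmul] at hunit
      push_cast at hunit ⊢
      rw [hunit]; ring
  · -- carry case
    push_neg at hsr
    have hm1 : 1 ≤ m := by
      rcases Nat.eq_zero_or_pos m with hm | hm
      · exfalso; rw [hm, pow_zero] at hq; omega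
      · exact hm
    have haQ' : a < Q := by
      by_contra h
      push_neg at h
      have := Nat.mul_le_mul_left q h
      omega
    have h2 : q * (Q - a - 1) + q * a + q = q * Q := by
      have h3 : (Q - a - 1) + a + 1 = Q := by omega
      calc q * (Q - a - 1) + q * a + q = q * ((Q - a - 1) + a + 1) := by ring
        _ = q * Q := by rw [h3]
    have hsub : k - k' = q * (Q - a - 1) + (q + r - s) := by omega
    have hb : b = Q - a - 1 := by
      rw [hbdef, hsub, Nat.mul_add_div hq0, Nat.div_eq_of_lt (by omega), add_zero]
    have ht' : t = q + r - s := by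
      rw [htdef, hsub, Nat.mul_add_mod, Nat.mod_eq_of_lt (by omega)]
    have habQ : a + b + 1 = Q := by omega
    have SU6 : SU p (N * (s.factorial * t.factorial))
        (Q.factorial * r.factorial * q.factorial) := by
      apply SU.cancel (pow_ne_zero (a + b) (Nat.factorial_ne_zero q))
      refine (SU.of_eq hp ?_).trans hp (SU5.symm.trans hp (SU.of_eq hp ?_))
      · rw [hN, pow_add]; ring
      · rw [← habQ, pow_succ, pow_add]; ring
    have hY0 : Q.factorial * r.factorial * q.factorial ≠ 0 :=
      mul_ne_zero (mul_ne_zero (Nat.factorial_ne_zero Q) (Nat.factorial_ne_zero r))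
        (Nat.factorial_ne_zero q)
    obtain ⟨hNst0, hfac, -⟩ := SU6.extract hp hY0
    have hst0 : s.factorial * t.factorial ≠ 0 :=
      mul_ne_zero (Nat.factorial_ne_zero s) (Nat.factorial_ne_zero t)
    have hN0 : N ≠ 0 := by
      intro h; apply hNst0; rw [h, zero_mul]
    have e1 : (N * (s.factorial * t.factorial)).factorization p =
        N.factorization p + (s.factorial.factorization p + t.factorial.factorization p) := by
      have h4 := congrArg (fun f => f p) (Nat.factorization_mul hN0 hst0)
      have h5 := congrArg (fun f => f p)
        (Nat.factorization_mul (Nat.factorial_ne_zero s) (Nat.factorial_ne_zero t))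
      simp only [Finsupp.add_apply] at h4 h5
      rw [h4, h5]
    have e2 : (Q.factorial * r.factorial * q.factorial).factorization p =
        v + r.factorial.factorization p + q.factorial.factorization p := by
      have h4 := congrArg (fun f => f p)
        (Nat.factorization_mul (mul_ne_zero (Nat.factorial_ne_zero Q) (Nat.factorial_ne_zero r))
          (Nat.factorial_ne_zero q))
      have h5 := congrArg (fun f => f p)
        (Nat.factorization_mul (Nat.factorial_ne_zero Q) (Nat.factorial_ne_zero r))
      simp only [Finsupp.add_apply] at h4 h5
      rw [h4, h5]
    have hstrict := strict_legendre hp hm1 hsq htq hrq (by omega : s + t = q + r)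
    rw [← hq] at hstrict
    rw [e1, e2] at hfac
    have h1 : v + 1 ≤ N.factorization p := by omega
    obtain ⟨M, hM⟩ := (hp.pow_dvd_iff_le_factorization hN0).mpr h1
    have hdiv : N / p ^ v = p * M := by
      rw [hM, pow_succ, mul_assoc, Nat.mul_div_cancel_left _ (pow_pos hp.pos v)]
    rw [hdiv, if_neg (not_le.mpr hsr)]
    push_cast
    rw [ZMod.natCast_self]
    ring

theorem stmt15 {A : Type*} [CommRing A] {I : Ideal A} (hI : DividedPowers I)
    (p m : ℕ) (hp : p.Prime) [CharP A p]
    (x y : A) (hx : x ^ p ^ m ∈ I) (hy : y ^ p ^ m ∈ I) (hxy : (x + y) ^ p ^ m ∈ I)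
    (k : ℕ) :
    (x + y) ^ (k % p ^ m) * hI.dpow (k / p ^ m) ((x + y) ^ p ^ m) =
      ∑ k' ∈ Finset.range (k + 1),
        (ZMod.castHom (dvd_refl p) A
            ((((k.choose k' * (k' / p ^ m).factorial * ((k - k') / p ^ m).factorial) /
                  p ^ padicValNat p (k / p ^ m).factorial : ℕ) : ZMod p) *
              ((((k / p ^ m).factorial / p ^ padicValNat p (k / p ^ m).factorial : ℕ) :
                  ZMod p))⁻¹)) *
          (x ^ (k' % p ^ m) * hI.dpow (k' / p ^ m) (x ^ p ^ m)) *
          (y ^ ((k - k') % p ^ m) * hI.dpow ((k - k') / p ^ m) (y ^ p ^ m)) := by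
  haveI : Fact p.Prime := ⟨hp⟩
  have hq0 : 0 < p ^ m := pow_pos hp.pos m
  rw [← Nat.factorization_def (k / p ^ m).factorial hp]
  set q := p ^ m with hq
  set Q := k / q with hQdef
  set r := k % q with hrdef
  set v := Q.factorial.factorization p with hv
  have hrq : r < q := Nat.mod_lt _ hq0
  have hkQ : k = q * Q + r := by rw [hQdef, hrdef, Nat.div_add_mod]
  have hu : ((Q.factorial / p ^ v : ℕ) : ZMod p) ≠ 0 := by
    intro h
    exact Nat.not_dvd_ordCompl hp (Nat.factorial_ne_zero Q)
      ((ZMod.natCast_eq_zero_iff _ p).mp h)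
  -- coefficient computation
  have hcoef : ∀ k' ∈ Finset.range (k + 1),
      (ZMod.castHom (dvd_refl p) A
          ((((k.choose k' * (k' / q).factorial * ((k - k') / q).factorial) /
                p ^ v : ℕ) : ZMod p) *
            (((Q.factorial / p ^ v : ℕ) : ZMod p))⁻¹)) =
        if k' % q ≤ r then ((r.choose (k' % q) : ℕ) : A) else 0 := by
    intro k' hk'
    have hk'le : k' ≤ k := Nat.lt_succ_iff.mp (Finset.mem_range.mp hk')
    have hkey := key_coeff hp m k k' hk'le
    rw [← hq] at hkey
    rw [hkey, mul_assoc, mul_inv_cancel₀ hu, mul_one]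
    split_ifs with h
    · simp [hrdef]
    · simp
  rw [Finset.sum_congr rfl fun k' hk' => by rw [hcoef k' hk']]
  -- turn the sum into a filtered sum
  have hsum1 : ∑ k' ∈ Finset.range (k + 1),
      (if k' % q ≤ r then ((r.choose (k' % q) : ℕ) : A) else 0) *
        (x ^ (k' % q) * hI.dpow (k' / q) (x ^ q)) *
        (y ^ ((k - k') % q) * hI.dpow ((k - k') / q) (y ^ q)) =
      ∑ k' ∈ (Finset.range (k + 1)).filter (fun k' => k' % q ≤ r),
        ((r.choose (k' % q) : ℕ) : A) *
          (x ^ (k' % q) * hI.dpow (k' / q) (x ^ q)) *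
          (y ^ ((k - k') % q) * hI.dpow ((k - k') / q) (y ^ q)) := by
    rw [Finset.sum_filter]
    apply Finset.sum_congr rfl
    intro k' _
    split_ifs with h
    · rfl
    · simp
  rw [hsum1]
  -- expand the left side
  have hadd : (x + y) ^ q = x ^ q + y ^ q := by
    rw [hq]; exact add_pow_char_pow x y p m
  rw [hadd, hI.dpow_add' (n := Q) hx hy, add_pow x y r, Finset.sum_mul_sum]
  -- both sides as sums over the product set
  rw [← Finset.sum_product']
  apply Finset.sum_nbij' (i := fun z => (q * z.2 + z.1)) (j := fun k' => (k' % q, k' / q))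
  · rintro ⟨c, a⟩ hz
    simp only [Finset.mem_product, Finset.mem_range] at hz
    obtain ⟨hc, ha⟩ := hz
    have hc' : c ≤ r := Nat.lt_succ_iff.mp hc
    have ha' : a ≤ Q := Nat.lt_succ_iff.mp ha
    simp only [Finset.mem_filter, Finset.mem_range]
    constructor
    · have : q * a + c ≤ q * Q + r :=
        Nat.add_le_add (Nat.mul_le_mul_left q ha') hc'
      omega
    · rw [Nat.mul_add_mod, Nat.mod_eq_of_lt (lt_of_le_of_lt hc' hrq)]
      exact hc'
  · intro k' hk'
    simp only [Finset.mem_filter, Finset.mem_range] at hk'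
    obtain ⟨hk'r, hk'mod⟩ := hk'
    simp only [Finset.mem_product, Finset.mem_range]
    exact ⟨Nat.lt_succ_of_le hk'mod,
      Nat.lt_succ_of_le (hQdef ▸ Nat.div_le_div_right (Nat.lt_succ_iff.mp hk'r))⟩
  · rintro ⟨c, a⟩ hz
    simp only [Finset.mem_product, Finset.mem_range] at hz
    obtain ⟨hc, ha⟩ := hz
    have hc' : c < q := lt_of_lt_of_le hc (by omega)
    have h1 : (q * a + c) % q = c := by
      rw [Nat.mul_add_mod, Nat.mod_eq_of_lt hc']
    have h2 : (q * a + c) / q = a := by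
      rw [Nat.mul_add_div hq0, Nat.div_eq_of_lt hc', add_zero]
    simp [h1, h2]
  · intro k' hk'
    exact Nat.div_add_mod k' q
  · rintro ⟨c, a⟩ hz
    simp only [Finset.mem_product, Finset.mem_range] at hz
    obtain ⟨hc, ha⟩ := hz
    have hc' : c ≤ r := Nat.lt_succ_iff.mp hc
    have ha' : a ≤ Q := Nat.lt_succ_iff.mp ha
    have hcq : c < q := lt_of_le_of_lt hc' hrq
    have h1 : (q * a + c) % q = c := by rw [Nat.mul_add_mod, Nat.mod_eq_of_lt hcq]
    have h2 : (q * a + c) / q = a := by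
      rw [Nat.mul_add_div hq0, Nat.div_eq_of_lt hcq, add_zero]
    have hmul : q * a ≤ q * Q := Nat.mul_le_mul_left q ha'
    have hqq : q * (Q - a) + q * a = q * Q := by
      rw [← Nat.mul_add, Nat.sub_add_cancel ha']
    have hsub : k - (q * a + c) = q * (Q - a) + (r - c) := by omega
    have h3 : (k - (q * a + c)) % q = r - c := by
      rw [hsub, Nat.mul_add_mod, Nat.mod_eq_of_lt (by omega)]
    have h4 : (k - (q * a + c)) / q = Q - a := by
      rw [hsub, Nat.mul_add_div hq0, Nat.div_eq_of_lt (by omega), add_zero]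
    simp only [h1, h2, h3, h4]
    ring
end
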